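/- For every n that is a power of two and every 0 ≤ k < n, there exists a set A of n real numbers with |A − A| = n^{log_2 3} such that every subset A' ⊆ A of size k satisfies |A' − A'| ≥ k^{log_2 3}. -/

import Mathlib

open Pointwise

open Real Filter

noncomputable def qc : ℝ := Real.logb 2 3

lemma qc_gt_one : 1 < qc := by
  have : Real.logb 2 2 < Real.logb 2 3 :=
    Real.logb_lt_logb one_lt_two (by norm_num) (by norm_num)
  simpa [qc, Real.logb_self_eq_one] using this

lemma qc_lt_two : qc < 2 := by
  have h : Real.logb 2 3 < Real.logb 2 4 :=
    Real.logb_lt_logb one_lt_two (by norm_num) (by norm_num)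
  have h4 : Real.logb 2 4 = 2 := by
    have h2 : (2:ℝ) ^ ((2:ℕ):ℝ) = 4 := by rw [Real.rpow_natCast]; norm_num
    have := Real.logb_rpow (b := 2) (x := ((2:ℕ):ℝ)) two_pos (by norm_num)
    rw [h2] at this; rw [this]; norm_num
  rw [qc]; linarith

lemma qc_pos : 0 < qc := lt_trans one_pos qc_gt_one

lemma two_rpow_qc : (2:ℝ) ^ qc = 3 := Real.rpow_logb two_pos (by norm_num) (by norm_num)

lemma sinh_le_self_mul_cosh {y : ℝ} (hy : 0 ≤ y) : Real.sinh y ≤ y * Real.cosh y := by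
  have mono : MonotoneOn (fun y => y * Real.cosh y - Real.sinh y) (Set.Ici (0:ℝ)) := by
    apply monotoneOn_of_deriv_nonneg (convex_Ici 0)
    · exact ((continuous_id.mul Real.continuous_cosh).sub Real.continuous_sinh).continuousOn
    · exact ((differentiable_id.mul Real.differentiable_cosh).sub
        Real.differentiable_sinh).differentiableOn
    · intro x hx
      rw [interior_Ici, Set.mem_Ioi] at hx
      have h1 : HasDerivAt (fun y : ℝ => y * Real.cosh y - Real.sinh y)
          (1 * Real.cosh x + x * Real.sinh x - Real.cosh x) x :=
        ((hasDerivAt_id x).mul (Real.hasDerivAt_cosh x)).sub (Real.hasDerivAt_sinh x)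
      rw [h1.deriv]
      nlinarith [Real.sinh_pos_iff.2 hx]
  have := mono (Set.self_mem_Ici) (Set.mem_Ici.2 hy) hy
  simp only [Real.sinh_zero, Real.cosh_zero, mul_one, zero_mul, sub_zero] at this
  linarith [this]

/-- `b * sinh (a x) - a * sinh (b x)` is nonneg for `0 ≤ b ≤ a`, `0 ≤ x`. -/
lemma sinh_ratio_mono {a b x : ℝ} (hb : 0 ≤ b) (hba : b ≤ a) (hx : 0 ≤ x) :
    a * Real.sinh (b * x) ≤ b * Real.sinh (a * x) := by
  have mono : MonotoneOn (fun x => b * Real.sinh (a * x) - a * Real.sinh (b * x))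
      (Set.Ici (0:ℝ)) := by
    apply monotoneOn_of_deriv_nonneg (convex_Ici 0)
    · exact ((continuous_const.mul (Real.continuous_sinh.comp
        (continuous_const.mul continuous_id))).sub
        (continuous_const.mul (Real.continuous_sinh.comp
        (continuous_const.mul continuous_id)))).continuousOn
    · apply Differentiable.differentiableOn
      apply Differentiable.sub <;>
        exact Differentiable.const_mul
          (Real.differentiable_sinh.comp ((differentiable_id).const_mul _)) _
    · intro t ht
      rw [interior_Ici, Set.mem_Ioi] at ht
      have h1 : HasDerivAt (fun x : ℝ => b * Real.sinh (a * x) - a * Real.sinh (b * x))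
          (b * (Real.cosh (a * t) * a) - a * (Real.cosh (b * t) * b)) t := by
        have da : HasDerivAt (fun x : ℝ => a * x) a t := by
          simpa using (hasDerivAt_id t).const_mul a
        have db : HasDerivAt (fun x : ℝ => b * x) b t := by
          simpa using (hasDerivAt_id t).const_mul b
        exact (((Real.hasDerivAt_sinh (a*t)).comp t da).const_mul b).sub
          (((Real.hasDerivAt_sinh (b*t)).comp t db).const_mul a)
      rw [h1.deriv]
      have hcosh : Real.cosh (b * t) ≤ Real.cosh (a * t) := by
        rw [Real.cosh_le_cosh]
        rw [abs_of_nonneg (mul_nonneg hb ht.le), abs_of_nonneg (mul_nonneg (hb.trans hba) ht.le)]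
        exact mul_le_mul_of_nonneg_right hba ht.le
      nlinarith [mul_nonneg (mul_nonneg hb (hb.trans hba)) (sub_nonneg.2 hcosh)]
  have := mono (Set.self_mem_Ici) (Set.mem_Ici.2 hx) hx
  simp only [mul_zero, Real.sinh_zero, sub_zero] at this
  linarith [this]

/-- chord inequality in product form :
`q cosh(qs) * 2 sinh s cosh s ≤ (2 + 2 q sinh² s) * sinh (qs)` for `s ≥ 0`. -/
lemma chord (s : ℝ) (hs : 0 ≤ s) :
    qc * Real.cosh (qc*s) * (2 * Real.sinh s * Real.cosh s)
      ≤ (2 + 2*qc*(Real.sinh s)^2) * Real.sinh (qc*s) := by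
  have h := sinh_ratio_mono (a := qc) (b := 2 - qc) (x := s)
    (by linarith [qc_lt_two]) (by linarith [qc_gt_one]) hs
  have hsub : Real.sinh ((2 - qc) * s) =
      Real.sinh (2*s) * Real.cosh (qc*s) - Real.cosh (2*s) * Real.sinh (qc*s) := by
    rw [show (2 - qc) * s = 2*s - qc*s by ring, Real.sinh_sub]
  rw [hsub] at h
  have h2s : Real.sinh (2*s) = 2 * Real.sinh s * Real.cosh s := by
    rw [Real.sinh_two_mul]; try ring
  have hc2s : Real.cosh (2*s) = 1 + 2 * (Real.sinh s)^2 := by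
    rw [Real.cosh_two_mul, Real.cosh_sq]; try ring
  rw [h2s, hc2s] at h
  nlinarith [h]

noncomputable def Rf (s : ℝ) : ℝ :=
  Real.log (Real.sinh (qc*s)) - Real.log (Real.sinh s) - (qc-1) * Real.log (2*Real.cosh s)

lemma Rf_hasDeriv {s : ℝ} (hs : 0 < s) :
    HasDerivAt Rf (Real.cosh (qc*s)*qc/Real.sinh (qc*s) - Real.cosh s/Real.sinh s
      - (qc-1) * (2*Real.sinh s/(2*Real.cosh s))) s := by
  have hqs : 0 < qc * s := mul_pos qc_pos hs
  have h1 : HasDerivAt (fun t : ℝ => Real.log (Real.sinh (qc*t)))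
      (Real.cosh (qc*s)*qc/Real.sinh (qc*s)) s := by
    have hinner : HasDerivAt (fun t : ℝ => Real.sinh (qc*t)) (Real.cosh (qc*s)*qc) s := by
      have : HasDerivAt (fun t : ℝ => qc*t) qc s := by simpa using (hasDerivAt_id s).const_mul qc
      exact (Real.hasDerivAt_sinh (qc*s)).comp s this
    exact hinner.log (by rw [Real.sinh_ne_zero]; exact hqs.ne')
  have h2 : HasDerivAt (fun t : ℝ => Real.log (Real.sinh t)) (Real.cosh s/Real.sinh s) s :=
    (Real.hasDerivAt_sinh s).log (by rw [Real.sinh_ne_zero]; exact hs.ne')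
  have h3 : HasDerivAt (fun t : ℝ => Real.log (2*Real.cosh t))
      (2*Real.sinh s/(2*Real.cosh s)) s := by
    have hinner : HasDerivAt (fun t : ℝ => 2*Real.cosh t) (2*Real.sinh s) s :=
      (Real.hasDerivAt_cosh s).const_mul 2
    exact hinner.log (by positivity)
  exact (h1.sub h2).sub (h3.const_mul (qc-1))

lemma Rf_deriv_nonpos {s : ℝ} (hs : 0 < s) :
    Real.cosh (qc*s)*qc/Real.sinh (qc*s) - Real.cosh s/Real.sinh s
      - (qc-1) * (2*Real.sinh s/(2*Real.cosh s)) ≤ 0 := by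
  have hqs : 0 < qc * s := mul_pos qc_pos hs
  have hsq : (0:ℝ) < Real.sinh (qc*s) := Real.sinh_pos_iff.2 hqs
  have hss : (0:ℝ) < Real.sinh s := Real.sinh_pos_iff.2 hs
  have hcs : (0:ℝ) < Real.cosh s := Real.cosh_pos s
  have heq : Real.cosh s/Real.sinh s + (qc-1) * (2*Real.sinh s/(2*Real.cosh s))
      = ((Real.cosh s)^2 + (qc-1)*(Real.sinh s)^2) / (Real.sinh s * Real.cosh s) := by
    field_simp
  rw [sub_sub, sub_nonpos, heq, div_le_div_iff₀ hsq (by positivity)]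
  have h := chord s hs.le
  have hc2 : (Real.cosh s)^2 = (Real.sinh s)^2 + 1 := Real.cosh_sq s
  nlinarith [h]

lemma Rf_antitone : AntitoneOn Rf (Set.Ioi (0:ℝ)) := by
  apply antitoneOn_of_deriv_nonpos (convex_Ioi 0)
  · intro s hs
    exact (Rf_hasDeriv hs).continuousAt.continuousWithinAt
  · intro s hs
    rw [interior_Ioi] at hs
    exact (Rf_hasDeriv hs).differentiableAt.differentiableWithinAt
  · intro s hs
    rw [interior_Ioi] at hs
    rw [(Rf_hasDeriv hs).deriv]
    exact Rf_deriv_nonpos hs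

lemma log_sinh_eq {y : ℝ} (hy : 0 < y) :
    Real.log (Real.sinh y) = y + Real.log (1 - Real.exp (-(2*y))) - Real.log 2 := by
  have h1 : Real.sinh y = Real.exp y * (1 - Real.exp (-(2*y))) / 2 := by
    rw [Real.sinh_eq]
    rw [mul_sub, mul_one, ← Real.exp_add]
    ring_nf
  have hpos : 0 < 1 - Real.exp (-(2*y)) := by
    have : Real.exp (-(2*y)) < 1 := Real.exp_lt_one_iff.2 (by linarith)
    linarith
  rw [h1, Real.log_div (by positivity) (by norm_num),
    Real.log_mul (by positivity) (by positivity), Real.log_exp]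

lemma log_cosh_eq (y : ℝ) :
    Real.log (2*Real.cosh y) = y + Real.log (1 + Real.exp (-(2*y))) := by
  have h1 : 2*Real.cosh y = Real.exp y * (1 + Real.exp (-(2*y))) := by
    rw [Real.cosh_eq, mul_add, mul_one, ← Real.exp_add]
    ring_nf
  rw [h1, Real.log_mul (by positivity) (by positivity), Real.log_exp]

lemma Rf_closed_form {s : ℝ} (hs : 0 < s) :
    Rf s = Real.log (1 - Real.exp (-(2*(qc*s)))) - Real.log (1 - Real.exp (-(2*s)))
      - (qc-1) * Real.log (1 + Real.exp (-(2*s))) := by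
  have hqs : 0 < qc * s := mul_pos qc_pos hs
  rw [Rf, log_sinh_eq hqs, log_sinh_eq hs, log_cosh_eq s]
  ring

lemma exp_neg_mul_tendsto {c : ℝ} (hc : 0 < c) :
    Tendsto (fun s : ℝ => Real.exp (-(c*s))) atTop (nhds 0) := by
  have h1 : Tendsto (fun s : ℝ => c*s) atTop atTop :=
    Tendsto.const_mul_atTop hc tendsto_id
  have h2 : Tendsto (fun s : ℝ => -(c*s)) atTop atBot := tendsto_neg_atBot_iff.2 h1
  exact Real.tendsto_exp_atBot.comp h2

lemma log_one_add_tendsto {c : ℝ} (hc : 0 < c) (a : ℝ) :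
    Tendsto (fun s : ℝ => Real.log (1 + a * Real.exp (-(c*s)))) atTop (nhds 0) := by
  have h1 : Tendsto (fun s : ℝ => 1 + a * Real.exp (-(c*s))) atTop (nhds 1) := by
    have := ((exp_neg_mul_tendsto hc).const_mul a)
    have h2 : Tendsto (fun s : ℝ => 1 + a * Real.exp (-(c*s))) atTop (nhds (1 + a * 0)) :=
      (tendsto_const_nhds).add this
    simpa using h2
  have hlog : Tendsto Real.log (nhds 1) (nhds 0) := by
    have := (Real.continuousAt_log (x := 1) one_ne_zero).tendsto
    simpa using this
  exact hlog.comp h1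

lemma Rf_tendsto : Tendsto Rf atTop (nhds 0) := by
  have h : Tendsto (fun s : ℝ => Real.log (1 - Real.exp (-(2*(qc*s))))
      - Real.log (1 - Real.exp (-(2*s))) - (qc-1) * Real.log (1 + Real.exp (-(2*s))))
      atTop (nhds 0) := by
    have h1 : Tendsto (fun s : ℝ => Real.log (1 + (-1) * Real.exp (-((2*qc)*s)))) atTop (nhds 0) :=
      log_one_add_tendsto (mul_pos two_pos qc_pos) (-1)
    have h2 : Tendsto (fun s : ℝ => Real.log (1 + (-1) * Real.exp (-(2*s)))) atTop (nhds 0) := by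
      have := log_one_add_tendsto (show (0:ℝ) < 2 by norm_num) (-1)
      simpa using this
    have h3 : Tendsto (fun s : ℝ => Real.log (1 + 1 * Real.exp (-(2*s)))) atTop (nhds 0) := by
      have := log_one_add_tendsto (show (0:ℝ) < 2 by norm_num) 1
      simpa using this
    have := (h1.sub h2).sub (h3.const_mul (qc-1))
    simp only [neg_one_mul, one_mul, sub_zero, mul_zero] at this ⊢
    convert this using 2 <;> ring_nf
  apply h.congr'
  filter_upwards [eventually_gt_atTop (0:ℝ)] with s hs
  rw [Rf_closed_form hs]

lemma Rf_nonneg {s : ℝ} (hs : 0 < s) : 0 ≤ Rf s := by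
  apply le_of_tendsto Rf_tendsto
  filter_upwards [eventually_ge_atTop s] with t ht
  exact Rf_antitone hs (lt_of_lt_of_le hs ht) ht

lemma sinh_rpow_ineq {s : ℝ} (hs : 0 ≤ s) :
    Real.sinh s * (2*Real.cosh s)^(qc-1) ≤ Real.sinh (qc*s) := by
  rcases eq_or_lt_of_le hs with h | h
  · simp [← h]
  have hqs : 0 < qc * s := mul_pos qc_pos h
  have hsq : (0:ℝ) < Real.sinh (qc*s) := Real.sinh_pos_iff.2 hqs
  have hss : (0:ℝ) < Real.sinh s := Real.sinh_pos_iff.2 h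
  have hc : (0:ℝ) < 2*Real.cosh s := by positivity
  have h0 := Rf_nonneg h
  rw [Rf, sub_sub, sub_nonneg] at h0
  have hlog : Real.log (Real.sinh s) + (qc-1) * Real.log (2*Real.cosh s)
      = Real.log (Real.sinh s * (2*Real.cosh s)^(qc-1)) := by
    rw [Real.log_mul hss.ne' (by positivity), Real.log_rpow hc]
  rw [hlog] at h0
  have := Real.exp_le_exp.2 h0
  rwa [Real.exp_log (by positivity), Real.exp_log hsq] at this

noncomputable def Pf (s : ℝ) : ℝ := 1 + 2*Real.cosh (qc*s) - (2*Real.cosh s)^qc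

lemma Pf_hasDeriv (s : ℝ) :
    HasDerivAt Pf (2*(Real.sinh (qc*s)*qc) - qc*(2*Real.cosh s)^(qc-1)*(2*Real.sinh s)) s := by
  have h1 : HasDerivAt (fun t : ℝ => 1 + 2*Real.cosh (qc*t)) (2*(Real.sinh (qc*s)*qc)) s := by
    have hm : HasDerivAt (fun t : ℝ => qc*t) qc s := by simpa using (hasDerivAt_id s).const_mul qc
    have := (hasDerivAt_const s 1).add (((Real.hasDerivAt_cosh (qc*s)).comp s hm).const_mul 2)
    simpa [Pi.add_def] using this
  have h2 : HasDerivAt (fun t : ℝ => (2*Real.cosh t)^qc)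
      (qc*(2*Real.cosh s)^(qc-1)*(2*Real.sinh s)) s := by
    have hinner : HasDerivAt (fun t : ℝ => 2*Real.cosh t) (2*Real.sinh s) s :=
      (Real.hasDerivAt_cosh s).const_mul 2
    have houter := Real.hasDerivAt_rpow_const (x := 2*Real.cosh s) (p := qc)
      (Or.inl (by positivity))
    have := houter.comp s hinner
    exact this
    try ring
  exact h1.sub h2

lemma Pf_nonneg_nonneg {s : ℝ} (hs : 0 ≤ s) : 0 ≤ Pf s := by
  have mono : MonotoneOn Pf (Set.Ici (0:ℝ)) := by
    apply monotoneOn_of_deriv_nonneg (convex_Ici 0)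
    · exact fun t _ => (Pf_hasDeriv t).continuousAt.continuousWithinAt
    · exact fun t _ => (Pf_hasDeriv t).differentiableAt.differentiableWithinAt
    · intro t ht
      rw [interior_Ici, Set.mem_Ioi] at ht
      rw [(Pf_hasDeriv t).deriv]
      have := sinh_rpow_ineq ht.le
      nlinarith [qc_pos]
  have h0 : Pf 0 = 0 := by
    have : (2:ℝ)*Real.cosh 0 = 2 := by rw [Real.cosh_zero]; norm_num
    rw [Pf, this, two_rpow_qc, mul_zero, Real.cosh_zero]
    norm_num
  have := mono Set.self_mem_Ici (Set.mem_Ici.2 hs) hs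
  rw [h0] at this
  exact this

lemma cosh_rpow_le (s : ℝ) : (2*Real.cosh s)^qc ≤ 1 + 2*Real.cosh (qc*s) := by
  have habs : 0 ≤ Pf |s| := Pf_nonneg_nonneg (abs_nonneg s)
  have h1 : Real.cosh |s| = Real.cosh s := Real.cosh_abs s
  have h2 : Real.cosh (qc*|s|) = Real.cosh (qc*s) := by
    rw [← Real.cosh_abs (qc*s), abs_mul, abs_of_pos qc_pos]
  rw [Pf, h1, h2] at habs
  linarith

lemma key8 {u : ℝ} (hu : 0 ≤ u) : (1+u)^qc ≤ 1 + u^(qc/2) + u^qc := by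
  rcases eq_or_lt_of_le hu with h | h
  · rw [← h]
    rw [Real.zero_rpow (div_ne_zero qc_pos.ne' two_ne_zero), Real.zero_rpow qc_pos.ne']
    norm_num
  · set s := Real.log u / 2 with hsdef
    have hlu : Real.log u = 2*s := by rw [hsdef]; ring
    have hu_eq : u = Real.exp (2*s) := by rw [← hlu, Real.exp_log h]
    have h1u : 1 + u = Real.exp s * (2*Real.cosh s) := by
      have e1 : Real.exp s * Real.exp s = Real.exp (2*s) := by
        rw [← Real.exp_add]; congr 1; ring
      have e2 : Real.exp s * Real.exp (-s) = 1 := by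
        rw [← Real.exp_add, show s + -s = 0 by ring, Real.exp_zero]
      rw [Real.cosh_eq, hu_eq]
      have expand : Real.exp s * (2*((Real.exp s + Real.exp (-s))/2))
          = Real.exp s*Real.exp s + Real.exp s*Real.exp (-s) := by ring
      rw [expand, e1, e2]
      ring
    have hrpow_exp : ∀ a b : ℝ, (Real.exp a)^b = Real.exp (a*b) := by
      intro a b
      rw [Real.rpow_def_of_pos (Real.exp_pos a), Real.log_exp]
    have hLHS : (1+u)^qc = Real.exp (s*qc) * (2*Real.cosh s)^qc := by
      rw [h1u, Real.mul_rpow (Real.exp_pos s).le (by positivity), hrpow_exp]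
    have hmain : (1+u)^qc ≤ Real.exp (s*qc) * (1 + 2*Real.cosh (qc*s)) := by
      rw [hLHS]
      exact mul_le_mul_of_nonneg_left (cosh_rpow_le s) (Real.exp_pos _).le
    have hexpand : Real.exp (s*qc) * (1 + 2*Real.cosh (qc*s))
        = 1 + Real.exp (s*qc) + Real.exp (2*s*qc) := by
      have e1 : Real.exp (s*qc) * Real.exp (qc*s) = Real.exp (2*s*qc) := by
        rw [← Real.exp_add]; congr 1; ring
      have e2 : Real.exp (s*qc) * Real.exp (-(qc*s)) = 1 := by
        rw [← Real.exp_add, show s*qc + -(qc*s) = 0 by ring, Real.exp_zero]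
      rw [Real.cosh_eq]
      have expand : Real.exp (s*qc) * (1 + 2*((Real.exp (qc*s) + Real.exp (-(qc*s)))/2))
          = Real.exp (s*qc) + (Real.exp (s*qc)*Real.exp (qc*s)
            + Real.exp (s*qc)*Real.exp (-(qc*s))) := by ring
      rw [expand, e1, e2]
      ring
    have hu1 : u^(qc/2) = Real.exp (s*qc) := by
      rw [Real.rpow_def_of_pos h, hlu]; congr 1; ring
    have hu2 : u^qc = Real.exp (2*s*qc) := by
      rw [Real.rpow_def_of_pos h, hlu]
    rw [hu1, hu2]
    linarith [hmain, hexpand.le, hexpand.ge]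

noncomputable def bc : ℝ := qc/2

lemma bc_pos : 0 < bc := by rw [bc]; exact div_pos qc_pos two_pos
lemma bc_lt_one : bc < 1 := by rw [bc]; linarith [qc_gt_one, qc_lt_two]
lemma two_bc : bc + bc = qc := by rw [bc]; ring

lemma rpow_subadd {a b : ℝ} (ha : 0 ≤ a) (hb : 0 ≤ b) :
    (a+b)^bc ≤ a^bc + b^bc := by
  rcases eq_or_lt_of_le ha with h | ha'
  · rw [← h, zero_add, Real.zero_rpow bc_pos.ne', zero_add]
  rcases eq_or_lt_of_le hb with h | hb'
  · rw [← h, add_zero, Real.zero_rpow bc_pos.ne', add_zero]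
  have hab : 0 < a + b := by linarith
  have h1 : (a+b)^(bc-1) ≤ a^(bc-1) :=
    Real.rpow_le_rpow_of_nonpos ha' (by linarith) (by linarith [bc_lt_one])
  have h2 : (a+b)^(bc-1) ≤ b^(bc-1) :=
    Real.rpow_le_rpow_of_nonpos hb' (by linarith) (by linarith [bc_lt_one])
  have e : ∀ c : ℝ, 0 < c → c * c^(bc-1) = c^bc := by
    intro c hc
    rw [show c * c^(bc-1) = c^(1:ℝ) * c^(bc-1) by rw [Real.rpow_one],
      ← Real.rpow_add hc]
    norm_num
  have hsum := add_le_add (mul_le_mul_of_nonneg_left h1 ha)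
    (mul_le_mul_of_nonneg_left h2 hb)
  calc (a+b)^bc = (a+b) * (a+b)^(bc-1) := (e _ hab).symm
    _ = a * (a+b)^(bc-1) + b * (a+b)^(bc-1) := by ring
    _ ≤ a * a^(bc-1) + b * b^(bc-1) := hsum
    _ = a^bc + b^bc := by rw [e _ ha', e _ hb']

section Phi

variable {x : ℝ}

/-- the auxiliary function `W`. -/
noncomputable def Wf (x t : ℝ) : ℝ := 1 + x^bc + t^bc - (1+x)^bc * (1+t)^bc

lemma Wf_hasDeriv (hx : 0 < x) {t : ℝ} (ht : 0 < t) :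
    HasDerivAt (Wf x) (bc * (t^(bc-1) - (1+x)^bc * (1+t)^(bc-1))) t := by
  have h1 : HasDerivAt (fun t : ℝ => t^bc) (bc * t^(bc-1)) t :=
    Real.hasDerivAt_rpow_const (Or.inl ht.ne')
  have h2 : HasDerivAt (fun t : ℝ => (1+t)^bc) (bc * (1+t)^(bc-1)) t := by
    have hinner : HasDerivAt (fun t : ℝ => 1+t) 1 t := by
      simpa using (hasDerivAt_id t).const_add 1
    have houter := Real.hasDerivAt_rpow_const (x := 1+t) (p := bc)
      (Or.inl (by positivity))
    have := houter.comp t hinner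
    simpa [Function.comp_def] using this
  have := ((hasDerivAt_const t (1 + x^bc)).add h1).sub (h2.const_mul ((1+x)^bc))
  exact this.congr_deriv (by ring)

lemma Wf_continuous (x : ℝ) : Continuous (Wf x) := by
  rw [continuous_iff_continuousAt]
  intro t
  have c1 : ContinuousAt (fun t : ℝ => t^bc) t :=
    Real.continuousAt_rpow_const t bc (Or.inr bc_pos.le)
  have c2 : ContinuousAt (fun t : ℝ => (1+t)^bc) t := by
    have : ContinuousAt (fun s : ℝ => s^bc) (1+t) :=
      Real.continuousAt_rpow_const _ bc (Or.inr bc_pos.le)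
    exact this.comp (by fun_prop)
  exact ((continuousAt_const.add c1).sub (continuousAt_const.mul c2))

lemma ratio_mono {s t : ℝ} (hs : 0 < s) (hst : s ≤ t) :
    (t/(1+t))^(bc-1) ≤ (s/(1+s))^(bc-1) := by
  have h1 : s/(1+s) ≤ t/(1+t) := by
    rw [div_le_div_iff₀ (by linarith) (by linarith)]
    nlinarith
  exact Real.rpow_le_rpow_of_nonpos (by positivity) h1 (by linarith [bc_lt_one])

lemma split_rpow {t : ℝ} (ht : 0 < t) :
    t^(bc-1) = (t/(1+t))^(bc-1) * (1+t)^(bc-1) := by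
  rw [← Real.mul_rpow (by positivity) (by positivity), div_mul_cancel₀]
  positivity

lemma Wf_zero_nonneg (hx : 0 ≤ x) : 0 ≤ Wf x 0 := by
  have h := rpow_subadd zero_le_one hx
  rw [Real.one_rpow] at h
  simp only [Wf, Real.zero_rpow bc_pos.ne', add_zero, Real.one_rpow, mul_one]
  linarith

lemma Wf_inv_nonneg (hx : 0 < x) : 0 ≤ Wf x (1/x) := by
  have hxbc : 0 < x^bc := Real.rpow_pos_of_pos hx bc
  have h8 := key8 hx.le
  have h2 : (1+x)^bc * (1+1/x)^bc = (1+x)^qc / x^bc := by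
    rw [← Real.mul_rpow (by positivity) (by positivity)]
    have e : (1+x)*(1+1/x) = (1+x)^(2:ℕ) / x := by field_simp; try ring
    rw [e, Real.div_rpow (by positivity) hx.le]
    congr 1
    rw [← Real.rpow_natCast (1+x) 2, ← Real.rpow_mul (by positivity)]
    rw [show ((2:ℕ):ℝ) * bc = qc by rw [← two_bc]; push_cast; ring]
  have h3 : (1/x)^bc = 1/x^bc := by
    rw [Real.div_rpow zero_le_one hx.le, Real.one_rpow]
  rw [Wf, h2, h3, sub_nonneg, div_le_iff₀ hxbc]
  have expand : (1 + x^bc + 1/x^bc) * x^bc = 1 + x^bc + x^bc*x^bc := by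
    field_simp; try ring
  rw [expand, ← Real.rpow_add hx, two_bc]
  calc (1+x)^qc ≤ 1 + x^(qc/2) + x^qc := h8
    _ = 1 + x^bc + x^qc := by rw [← bc]
    _ ≤ 1 + x^bc + x^qc := le_refl _

lemma phi_ineq {x y : ℝ} (hx : 0 ≤ x) (hy : 0 ≤ y) (hxy : x*y ≤ 1) :
    ((1+x)*(1+y))^bc ≤ 1 + x^bc + y^bc := by
  -- reduce to `0 ≤ Wf x y`
  have main : ∀ x y : ℝ, 0 < x → 0 < y → x*y ≤ 1 → 0 ≤ Wf x y := by
    intro x y hx' hy' hxy'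
    have hyx : y ≤ 1/x := by
      rw [le_div_iff₀ hx']; linarith [mul_comm x y]
    by_cases hC : (1+x)^bc ≤ (y/(1+y))^(bc-1)
    · -- increasing on [0, y]
      have mono : MonotoneOn (Wf x) (Set.Icc 0 y) := by
        apply monotoneOn_of_deriv_nonneg (convex_Icc 0 y)
        · exact (Wf_continuous x).continuousOn
        · intro t ht
          rw [interior_Icc] at ht
          exact (Wf_hasDeriv hx' ht.1).differentiableAt.differentiableWithinAt
        · intro t ht
          rw [interior_Icc] at ht
          rw [(Wf_hasDeriv hx' ht.1).deriv]
          obtain ⟨ht1, ht2⟩ := ht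
          have hKt : (1+x)^bc ≤ (t/(1+t))^(bc-1) :=
            hC.trans (ratio_mono ht1 ht2.le)
          have : (1+x)^bc * (1+t)^(bc-1) ≤ t^(bc-1) := by
            rw [split_rpow ht1]
            exact mul_le_mul_of_nonneg_right hKt (Real.rpow_nonneg (by linarith) _)
          have hb := bc_pos
          nlinarith
      have := mono (Set.mem_Icc.2 ⟨le_refl 0, hy'.le⟩)
        (Set.mem_Icc.2 ⟨hy'.le, le_refl y⟩) hy'.le
      linarith [Wf_zero_nonneg hx'.le]
    · -- decreasing on [y, 1/x]
      push_neg at hC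
      have anti : AntitoneOn (Wf x) (Set.Icc y (1/x)) := by
        apply antitoneOn_of_deriv_nonpos (convex_Icc y (1/x))
        · exact (Wf_continuous x).continuousOn
        · intro t ht
          rw [interior_Icc] at ht
          exact (Wf_hasDeriv hx' (hy'.trans ht.1)).differentiableAt.differentiableWithinAt
        · intro t ht
          rw [interior_Icc] at ht
          have ht' : 0 < t := hy'.trans ht.1
          rw [(Wf_hasDeriv hx' ht').deriv]
          have hKt : (t/(1+t))^(bc-1) ≤ (1+x)^bc :=
            (ratio_mono hy' ht.1.le).trans hC.le
          have : t^(bc-1) ≤ (1+x)^bc * (1+t)^(bc-1) := by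
            rw [split_rpow ht']
            exact mul_le_mul_of_nonneg_right hKt (Real.rpow_nonneg (by linarith [ht']) _)
          have hb := bc_pos
          nlinarith
      have := anti (Set.mem_Icc.2 ⟨le_refl y, hyx⟩)
        (Set.mem_Icc.2 ⟨hyx, le_refl _⟩) hyx
      linarith [Wf_inv_nonneg hx']
  rcases eq_or_lt_of_le hx with h | hx'
  · rw [← h, Real.zero_rpow bc_pos.ne',
      show ((1:ℝ)+0)*(1+y) = 1 + y by ring]
    have h1 := rpow_subadd zero_le_one hy
    rw [Real.one_rpow] at h1
    linarith
  rcases eq_or_lt_of_le hy with h | hy'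
  · rw [← h, Real.zero_rpow bc_pos.ne',
      show ((1:ℝ)+x)*(1+0) = 1 + x by ring]
    have h1 := rpow_subadd zero_le_one hx
    rw [Real.one_rpow] at h1
    linarith
  have := main x y hx' hy' hxy
  rw [Wf] at this
  rw [Real.mul_rpow (by positivity) (by positivity)]
  linarith

end Phi

/-- the four-variable inequality, asymmetric version. -/
lemma Q4' {b0 b1 c0 c1 : ℝ} (hb0 : 0 ≤ b0) (hb1 : 0 ≤ b1) (hc0 : 0 ≤ c0) (hc1 : 0 ≤ c1)
    (hmax : b1*c1 ≤ b0*c0) :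
    ((b0+b1)*(c0+c1))^bc ≤ (b0*c1)^bc + (b1*c0)^bc + (b0*c0)^bc := by
  rcases eq_or_lt_of_le hb0 with h | hb0'
  · -- b0 = 0
    have h11 : b1*c1 = 0 := le_antisymm (by rw [← h] at hmax; simpa using hmax)
      (mul_nonneg hb1 hc1)
    rcases mul_eq_zero.1 h11 with h1 | h1
    · rw [← h, h1]
      simp only [add_zero, zero_add, zero_mul, mul_zero, Real.zero_rpow bc_pos.ne']
      try positivity
      try exact le_refl _
    · rw [← h, h1]
      simp only [zero_add, add_zero, zero_mul, mul_zero, Real.zero_rpow bc_pos.ne']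
      try positivity
      try exact le_refl _
  rcases eq_or_lt_of_le hc0 with h | hc0'
  · have h11 : b1*c1 = 0 := le_antisymm (by rw [← h] at hmax; simpa using hmax)
      (mul_nonneg hb1 hc1)
    rcases mul_eq_zero.1 h11 with h1 | h1
    · rw [← h, h1]
      simp only [add_zero, zero_add, zero_mul, mul_zero, Real.zero_rpow bc_pos.ne']
      try positivity
      try exact le_refl _
    · rw [← h, h1]
      simp only [add_zero, zero_add, zero_mul, mul_zero, Real.zero_rpow bc_pos.ne']
      try positivity
      try exact le_refl _
  -- main case
  set x := b1/b0 with hxdef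
  set y := c1/c0 with hydef
  have hx : 0 ≤ x := by positivity
  have hy : 0 ≤ y := by positivity
  have hxy : x*y ≤ 1 := by
    rw [hxdef, hydef, div_mul_div_comm, div_le_one (by positivity)]
    exact hmax
  have hphi := phi_ineq hx hy hxy
  have hfact : (b0+b1)*(c0+c1) = (b0*c0) * ((1+x)*(1+y)) := by
    rw [hxdef, hydef]; field_simp; try ring
  have hx1 : (b0*c0) * y = b0*c1 := by rw [hydef]; field_simp; try ring
  have hx2 : (b0*c0) * x = b1*c0 := by rw [hxdef]; field_simp; try ring
  have hc00 : (0:ℝ) < b0*c0 := mul_pos hb0' hc0'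
  calc ((b0+b1)*(c0+c1))^bc = (b0*c0)^bc * ((1+x)*(1+y))^bc := by
        rw [hfact, Real.mul_rpow hc00.le (by positivity)]
    _ ≤ (b0*c0)^bc * (1 + x^bc + y^bc) := by
        apply mul_le_mul_of_nonneg_left hphi (by positivity)
    _ = (b0*c0)^bc + (b0*c0)^bc*x^bc + (b0*c0)^bc*y^bc := by ring
    _ = (b0*c0)^bc + (b1*c0)^bc + (b0*c1)^bc := by
        rw [← Real.mul_rpow hc00.le hx, ← Real.mul_rpow hc00.le hy, hx1, hx2]
    _ = (b0*c1)^bc + (b1*c0)^bc + (b0*c0)^bc := by ring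

lemma Q4 {b0 b1 c0 c1 : ℝ} (hb0 : 0 ≤ b0) (hb1 : 0 ≤ b1) (hc0 : 0 ≤ c0) (hc1 : 0 ≤ c1) :
    ((b0+b1)*(c0+c1))^bc
      ≤ (b0*c1)^bc + (b1*c0)^bc + max ((b0*c0)^bc) ((b1*c1)^bc) := by
  rcases le_total (b1*c1) (b0*c0) with h | h
  · have := Q4' hb0 hb1 hc0 hc1 h
    have hm : (b0*c0)^bc ≤ max ((b0*c0)^bc) ((b1*c1)^bc) := le_max_left _ _
    linarith
  · have := Q4' hb1 hb0 hc1 hc0 h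
    have hm : (b1*c1)^bc ≤ max ((b0*c0)^bc) ((b1*c1)^bc) := le_max_right _ _
    have e1 : (b1+b0)*(c1+c0) = (b0+b1)*(c0+c1) := by ring
    rw [e1] at this
    linarith

noncomputable def Cantor : ℕ → Finset ℝ
  | 0 => {0}
  | (m+1) => Cantor m ∪ (Cantor m).image (· + 3^m)

lemma Cantor_bounds : ∀ m, ∀ x ∈ Cantor m, 0 ≤ x ∧ x ≤ ((3:ℝ)^m - 1)/2 := by
  intro m
  induction m with
  | zero => intro x hx; simp [Cantor] at hx; simp [hx]
  | succ m ih =>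
    intro x hx
    rw [Cantor, Finset.mem_union] at hx
    have hS : ((3:ℝ)^(m+1) - 1)/2 = 3^m + ((3:ℝ)^m - 1)/2 := by ring
    rcases hx with hx | hx
    · obtain ⟨h1, h2⟩ := ih x hx
      constructor
      · exact h1
      · rw [hS]; have : (0:ℝ) < 3^m := by positivity
        linarith
    · rw [Finset.mem_image] at hx
      obtain ⟨y, hy, rfl⟩ := hx
      obtain ⟨h1, h2⟩ := ih y hy
      have : (0:ℝ) < 3^m := by positivity
      constructor
      · linarith
      · rw [hS]; linarith

lemma Cantor_disj (m : ℕ) : Disjoint (Cantor m) ((Cantor m).image (· + 3^m)) := by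
  rw [Finset.disjoint_left]
  intro x hx hx'
  obtain ⟨h1, h2⟩ := Cantor_bounds m x hx
  rw [Finset.mem_image] at hx'
  obtain ⟨y, hy, hxy⟩ := hx'
  obtain ⟨h3, h4⟩ := Cantor_bounds m y hy
  have : (1:ℝ) ≤ 3^m := one_le_pow₀ (by norm_num)
  rw [← hxy] at h2
  linarith

lemma Cantor_card (m : ℕ) : (Cantor m).card = 2^m := by
  induction m with
  | zero => simp [Cantor]
  | succ m ih =>
    rw [Cantor, Finset.card_union_of_disjoint (Cantor_disj m),
      Finset.card_image_of_injective _ (add_left_injective _), ih]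
    ring

-- translation helpers
lemma sub_image_right (s u : Finset ℝ) (t : ℝ) :
    s - u.image (· + t) = (s - u).image (· - t) := by
  ext a
  simp only [Finset.mem_sub, Finset.mem_image]
  constructor
  · rintro ⟨b, hb, c, ⟨c', hc', rfl⟩, rfl⟩
    exact ⟨b - c', ⟨b, hb, c', hc', rfl⟩, by ring⟩
  · rintro ⟨d, ⟨b, hb, c', hc', rfl⟩, rfl⟩
    exact ⟨b, hb, c' + t, ⟨c', hc', rfl⟩, by ring⟩

lemma sub_image_left (s u : Finset ℝ) (t : ℝ) :
    s.image (· + t) - u = (s - u).image (· + t) := by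
  ext a
  simp only [Finset.mem_sub, Finset.mem_image]
  constructor
  · rintro ⟨b, ⟨b', hb', rfl⟩, c, hc, rfl⟩
    exact ⟨b' - c, ⟨b', hb', c, hc, rfl⟩, by ring⟩
  · rintro ⟨d, ⟨b', hb', c, hc, rfl⟩, rfl⟩
    exact ⟨b' + t, ⟨b', hb', rfl⟩, c, hc, by ring⟩

lemma sub_image_both (s u : Finset ℝ) (t : ℝ) :
    s.image (· + t) - u.image (· + t) = s - u := by
  rw [sub_image_left, sub_image_right]
  rw [Finset.image_image]
  have : ((· + t) ∘ (· - t) : ℝ → ℝ) = id := by funext z; simp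
  rw [this, Finset.image_id]

lemma card_image_sub (s : Finset ℝ) (t : ℝ) : (s.image (· + t)).card = s.card :=
  Finset.card_image_of_injective _ (add_left_injective _)

lemma card_image_sub' (s : Finset ℝ) (t : ℝ) : (s.image (· - t)).card = s.card :=
  Finset.card_image_of_injective _ (sub_left_injective)

lemma image_cancel (s : Finset ℝ) (t : ℝ) : (s.image (· - t)).image (· + t) = s := by
  rw [Finset.image_image]
  have : ((· + t) ∘ (· - t) : ℝ → ℝ) = id := by funext z; simp
  rw [this, Finset.image_id]

lemma mem_sub_bounds {X Y : Finset ℝ} {m : ℕ} (hX : X ⊆ Cantor m) (hY : Y ⊆ Cantor m) :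
    ∀ a ∈ X - Y, -(((3:ℝ)^m - 1)/2) ≤ a ∧ a ≤ ((3:ℝ)^m - 1)/2 := by
  intro a ha
  rw [Finset.mem_sub] at ha
  obtain ⟨b, hb, c, hc, rfl⟩ := ha
  obtain ⟨h1, h2⟩ := Cantor_bounds m b (hX hb)
  obtain ⟨h3, h4⟩ := Cantor_bounds m c (hY hc)
  constructor <;> linarith

lemma lemmaM : ∀ m : ℕ, ∀ B C : Finset ℝ, B ⊆ Cantor m → C ⊆ Cantor m →
    ((B.card * C.card : ℕ) : ℝ)^bc ≤ ((B - C).card : ℝ) := by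
  intro m
  induction m with
  | zero =>
    intro B C hB hC
    rw [show Cantor 0 = {(0:ℝ)} from rfl] at hB hC
    rcases Finset.subset_singleton_iff.1 hB with rfl | rfl
    · simp [Real.zero_rpow bc_pos.ne']
    rcases Finset.subset_singleton_iff.1 hC with rfl | rfl
    · simp [Real.zero_rpow bc_pos.ne']
    · rw [Finset.singleton_sub_singleton]
      simp [Real.one_rpow]
  | succ m ih =>
    intro B C hB hC
    set t : ℝ := 3^m with htdef
    set S : ℝ := ((3:ℝ)^m - 1)/2 with hSdef
    have hSt : 2*S < t := by rw [hSdef, htdef]; ring_nf; norm_num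
    have hS0 : 0 ≤ S := by
      rw [hSdef]
      have : (1:ℝ) ≤ 3^m := one_le_pow₀ (by norm_num)
      linarith
    set B0 := B ∩ Cantor m with hB0def
    set B1 := B \ Cantor m with hB1def
    set C0 := C ∩ Cantor m with hC0def
    set C1 := C \ Cantor m with hC1def
    set B1' := B1.image (· - t) with hB1'def
    set C1' := C1.image (· - t) with hC1'def
    have hB0sub : B0 ⊆ Cantor m := Finset.inter_subset_right
    have hC0sub : C0 ⊆ Cantor m := Finset.inter_subset_right
    have hB1img : B1 ⊆ (Cantor m).image (· + t) := by
      intro x hx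
      rw [hB1def, Finset.mem_sdiff] at hx
      have := hB hx.1
      rw [Cantor, Finset.mem_union] at this
      rcases this with h | h
      · exact absurd h hx.2
      · exact h
    have hC1img : C1 ⊆ (Cantor m).image (· + t) := by
      intro x hx
      rw [hC1def, Finset.mem_sdiff] at hx
      have := hC hx.1
      rw [Cantor, Finset.mem_union] at this
      rcases this with h | h
      · exact absurd h hx.2
      · exact h
    have hB1'sub : B1' ⊆ Cantor m := by
      intro x hx
      rw [hB1'def, Finset.mem_image] at hx
      obtain ⟨y, hy, rfl⟩ := hx
      have := hB1img hy
      rw [Finset.mem_image] at this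
      obtain ⟨z, hz, hzy⟩ := this
      rw [← hzy]
      simpa using hz
    have hC1'sub : C1' ⊆ Cantor m := by
      intro x hx
      rw [hC1'def, Finset.mem_image] at hx
      obtain ⟨y, hy, rfl⟩ := hx
      have := hC1img hy
      rw [Finset.mem_image] at this
      obtain ⟨z, hz, hzy⟩ := this
      rw [← hzy]
      simpa using hz
    have hB1eq : B1 = B1'.image (· + t) := (image_cancel B1 t).symm
    have hC1eq : C1 = C1'.image (· + t) := (image_cancel C1 t).symm
    -- the three chunks
    have hchunk1 : B0 - C1 = (B0 - C1').image (· - t) := by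
      rw [hC1eq, sub_image_right]
    have hchunk2 : B1 - C1 = B1' - C1' := by
      rw [hB1eq, hC1eq, sub_image_both]
    have hchunk3 : B1 - C0 = (B1' - C0).image (· + t) := by
      rw [hB1eq, sub_image_left]
    -- membership bounds
    have hbnd1 : ∀ a ∈ B0 - C1, a ≤ S - t := by
      intro a ha
      rw [hchunk1, Finset.mem_image] at ha
      obtain ⟨d, hd, rfl⟩ := ha
      have := (mem_sub_bounds hB0sub hC1'sub d hd).2
      linarith
    have hbndm : ∀ a ∈ (B0 - C0) ∪ (B1 - C1), -S ≤ a ∧ a ≤ S := by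
      intro a ha
      rw [Finset.mem_union] at ha
      rcases ha with ha | ha
      · exact mem_sub_bounds hB0sub hC0sub a ha
      · rw [hchunk2] at ha
        exact mem_sub_bounds hB1'sub hC1'sub a ha
    have hbnd3 : ∀ a ∈ B1 - C0, t - S ≤ a := by
      intro a ha
      rw [hchunk3, Finset.mem_image] at ha
      obtain ⟨d, hd, rfl⟩ := ha
      have := (mem_sub_bounds hB1'sub hC0sub d hd).1
      linarith
    -- disjointness
    have d1 : Disjoint (B0 - C1) ((B0 - C0) ∪ (B1 - C1)) := by
      rw [Finset.disjoint_left]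
      intro a ha ha'
      have h1 := hbnd1 a ha
      have h2 := (hbndm a ha').1
      linarith
    have d2 : Disjoint ((B0 - C1) ∪ ((B0 - C0) ∪ (B1 - C1))) (B1 - C0) := by
      rw [Finset.disjoint_left]
      intro a ha ha'
      have h3 := hbnd3 a ha'
      rw [Finset.mem_union] at ha
      rcases ha with ha | ha
      · have := hbnd1 a ha; linarith
      · have := (hbndm a ha).2; linarith
    -- union is inside B - C
    have hunion : (B0 - C1) ∪ ((B0 - C0) ∪ (B1 - C1)) ∪ (B1 - C0) ⊆ B - C := by
      have s0B : B0 ⊆ B := Finset.inter_subset_left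
      have s1B : B1 ⊆ B := Finset.sdiff_subset
      have s0C : C0 ⊆ C := Finset.inter_subset_left
      have s1C : C1 ⊆ C := Finset.sdiff_subset
      apply Finset.union_subset
      apply Finset.union_subset
      · exact Finset.sub_subset_sub s0B s1C
      · exact Finset.union_subset (Finset.sub_subset_sub s0B s0C)
          (Finset.sub_subset_sub s1B s1C)
      · exact Finset.sub_subset_sub s1B s0C
    have hcard : (B0 - C1).card + ((B0 - C0) ∪ (B1 - C1)).card + (B1 - C0).card
        ≤ (B - C).card := by
      rw [← Finset.card_union_of_disjoint d1, ← Finset.card_union_of_disjoint d2]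
      exact Finset.card_le_card hunion
    -- apply IH to the four level-m differences
    have ih1 := ih B0 C1' hB0sub hC1'sub
    have ih2 := ih B0 C0 hB0sub hC0sub
    have ih3 := ih B1' C1' hB1'sub hC1'sub
    have ih4 := ih B1' C0 hB1'sub hC0sub
    -- card identifications
    have e1 : (B0 - C1).card = (B0 - C1').card := by rw [hchunk1, card_image_sub']
    have e2 : (B1 - C1).card = (B1' - C1').card := by rw [hchunk2]
    have e3 : (B1 - C0).card = (B1' - C0).card := by rw [hchunk3, card_image_sub]
    have eB1 : B1'.card = B1.card := card_image_sub' B1 t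
    have eC1 : C1'.card = C1.card := card_image_sub' C1 t
    have hcB : B.card = B0.card + B1.card := (Finset.card_inter_add_card_sdiff B (Cantor m)).symm
    have hcC : C.card = C0.card + C1.card := (Finset.card_inter_add_card_sdiff C (Cantor m)).symm
    -- the real-number chain
    have hQ := Q4 (b0 := (B0.card:ℝ)) (b1 := (B1.card:ℝ)) (c0 := (C0.card:ℝ))
      (c1 := (C1.card:ℝ)) (Nat.cast_nonneg _) (Nat.cast_nonneg _) (Nat.cast_nonneg _) (Nat.cast_nonneg _)
    have hmid : max (((B0.card:ℝ) * (C0.card:ℝ))^bc) (((B1.card:ℝ) * (C1.card:ℝ))^bc)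
        ≤ (((B0 - C0) ∪ (B1 - C1)).card : ℝ) := by
      apply max_le
      · calc ((B0.card:ℝ) * (C0.card:ℝ))^bc = ((B0.card * C0.card : ℕ) : ℝ)^bc := by
              push_cast; ring_nf
          _ ≤ ((B0 - C0).card : ℝ) := ih2
          _ ≤ (((B0 - C0) ∪ (B1 - C1)).card : ℝ) := by
              exact_mod_cast Finset.card_le_card Finset.subset_union_left
      · calc ((B1.card:ℝ) * (C1.card:ℝ))^bc = ((B1'.card * C1'.card : ℕ) : ℝ)^bc := by
              rw [eB1, eC1]; push_cast; ring_nf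
          _ ≤ ((B1' - C1').card : ℝ) := ih3
          _ = ((B1 - C1).card : ℝ) := by rw [e2]
          _ ≤ (((B0 - C0) ∪ (B1 - C1)).card : ℝ) := by
              exact_mod_cast Finset.card_le_card Finset.subset_union_right
    have hleft : ((B0.card:ℝ) * (C1.card:ℝ))^bc ≤ ((B0 - C1).card : ℝ) := by
      calc ((B0.card:ℝ) * (C1.card:ℝ))^bc = ((B0.card * C1'.card : ℕ) : ℝ)^bc := by
            rw [eC1]; push_cast; ring_nf
        _ ≤ ((B0 - C1').card : ℝ) := ih1
        _ = ((B0 - C1).card : ℝ) := by rw [e1]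
    have hright : ((B1.card:ℝ) * (C0.card:ℝ))^bc ≤ ((B1 - C0).card : ℝ) := by
      calc ((B1.card:ℝ) * (C0.card:ℝ))^bc = ((B1'.card * C0.card : ℕ) : ℝ)^bc := by
            rw [eB1]; push_cast; ring_nf
        _ ≤ ((B1' - C0).card : ℝ) := ih4
        _ = ((B1 - C0).card : ℝ) := by rw [e3]
    have hcast : ((B.card * C.card : ℕ) : ℝ)
        = ((B0.card:ℝ) + (B1.card:ℝ)) * ((C0.card:ℝ) + (C1.card:ℝ)) := by
      rw [hcB, hcC]; push_cast; ring
    have hcardR : ((B0 - C1).card : ℝ) + (((B0 - C0) ∪ (B1 - C1)).card : ℝ)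
        + ((B1 - C0).card : ℝ) ≤ ((B - C).card : ℝ) := by exact_mod_cast hcard
    calc ((B.card * C.card : ℕ) : ℝ)^bc
        = (((B0.card:ℝ) + (B1.card:ℝ)) * ((C0.card:ℝ) + (C1.card:ℝ)))^bc := by rw [hcast]
      _ ≤ ((B0.card:ℝ)*(C1.card:ℝ))^bc + ((B1.card:ℝ)*(C0.card:ℝ))^bc
          + max (((B0.card:ℝ)*(C0.card:ℝ))^bc) (((B1.card:ℝ)*(C1.card:ℝ))^bc) := hQ
      _ ≤ ((B0 - C1).card : ℝ) + ((B1 - C0).card : ℝ)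
          + (((B0 - C0) ∪ (B1 - C1)).card : ℝ) := by
          exact add_le_add (add_le_add hleft hright) hmid
      _ ≤ ((B - C).card : ℝ) := by linarith [hcardR]

lemma Cantor_sub_card : ∀ m : ℕ, ((Cantor m - Cantor m)).card = 3^m := by
  intro m
  induction m with
  | zero =>
    rw [show Cantor 0 = {(0:ℝ)} from rfl, Finset.singleton_sub_singleton]
    simp
  | succ m ih =>
    set t : ℝ := 3^m with htdef
    set S : ℝ := ((3:ℝ)^m - 1)/2 with hSdef
    have hSt : 2*S < t := by rw [hSdef, htdef]; ring_nf; norm_num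
    have hS0 : 0 ≤ S := by
      rw [hSdef]
      have : (1:ℝ) ≤ 3^m := one_le_pow₀ (by norm_num)
      linarith
    set A := Cantor m with hAdef
    set D := A - A with hDdef
    have hDbnd : ∀ a ∈ D, -S ≤ a ∧ a ≤ S :=
      mem_sub_bounds (le_refl A) (le_refl A)
    have hdecomp : Cantor (m+1) - Cantor (m+1)
        = (D ∪ D.image (· - t)) ∪ (D.image (· + t)) := by
      rw [Cantor, Finset.union_sub, Finset.sub_union, Finset.sub_union]
      rw [← hAdef]
      rw [sub_image_right A A t, sub_image_left A A t, sub_image_both A A t]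
      rw [← hDdef]
      ext a
      simp only [Finset.mem_union]
      tauto
    have hd1 : Disjoint D (D.image (· - t)) := by
      rw [Finset.disjoint_left]
      intro a ha ha'
      rw [Finset.mem_image] at ha'
      obtain ⟨d, hd, rfl⟩ := ha'
      have h1 := (hDbnd _ hd).2
      have h2 := (hDbnd _ ha).1
      linarith
    have hd2 : Disjoint (D ∪ D.image (· - t)) (D.image (· + t)) := by
      rw [Finset.disjoint_left]
      intro a ha ha'
      rw [Finset.mem_image] at ha'
      obtain ⟨d, hd, rfl⟩ := ha'
      have h1 := (hDbnd _ hd).1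
      rw [Finset.mem_union] at ha
      rcases ha with ha | ha
      · have := (hDbnd _ ha).2
        linarith
      · rw [Finset.mem_image] at ha
        obtain ⟨e, he, hee⟩ := ha
        have h2 := (hDbnd _ he).2
        linarith
    rw [hdecomp, Finset.card_union_of_disjoint hd2, Finset.card_union_of_disjoint hd1,
      card_image_sub, card_image_sub', ih]
    ring

theorem stmt_12 (n k m : ℕ) (hn : n = 2 ^ m) (hk : k < n) :
    ∃ A : Finset ℝ, A.card = n ∧ ((A - A).card : ℝ) = (n : ℝ) ^ Real.logb 2 3 ∧
      ∀ A' ⊆ A, A'.card = k → ((A' - A').card : ℝ) ≥ (k : ℝ) ^ Real.logb 2 3 := by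
  have hq : Real.logb 2 3 = qc := rfl
  refine ⟨Cantor m, ?_, ?_, ?_⟩
  · rw [Cantor_card, hn]
  · rw [Cantor_sub_card, hq, hn]
    have h1 : ((2^m : ℕ) : ℝ) = (2:ℝ)^(m:ℝ) := by
      push_cast
      rw [Real.rpow_natCast]
    rw [h1, ← Real.rpow_mul (by norm_num : (0:ℝ) ≤ 2), mul_comm,
      Real.rpow_mul (by norm_num : (0:ℝ) ≤ 2), two_rpow_qc, Real.rpow_natCast]
    push_cast
    ring
  · intro A' hsub hcardA'
    have hM := lemmaM m A' A' hsub hsub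
    rw [hcardA'] at hM
    have hkey : ((k:ℝ))^(Real.logb 2 3) = ((k*k : ℕ) : ℝ)^bc := by
      rw [hq, ← two_bc, Real.rpow_add' (Nat.cast_nonneg k) (by rw [two_bc]; exact qc_pos.ne'),
        ← Real.mul_rpow (Nat.cast_nonneg k) (Nat.cast_nonneg k)]
      push_cast
      ring_nf
    rw [ge_iff_le, hkey]
    exact hM
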